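/- Let K be a field and n, m positive integers with 1 ≤ m ≤ n. Let Mat_n(K) denote the n×n matrices over K, and for X, Z ∈ Mat_n(K) write x_{k,l}, z_{k,l} for their entries. Then the map T_{n,m} : (Mat_n(K))³ → (Mat_n(K))³ sending (X, Y, Z) to (X, Ŷ, Z), where Ŷ is the matrix with entries ŷ_{k,l} = y_{k,l} + Σ_{i=1}^{m} x_{k,i} z_{n−m+i, l}, satisfies the tetrahedron equation. -/
import Mathlib


/-- `T` acting on factors 1,2,3 of the sixfold Cartesian product `D⁶`. -/
def tetra123 {D : Type*} (T : D × D × D → D × D × D) :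
    D × D × D × D × D × D → D × D × D × D × D × D :=
  fun q =>
    match q with
    | (x, y, z, r, s, t) =>
      ((T (x, y, z)).1, (T (x, y, z)).2.1, (T (x, y, z)).2.2, r, s, t)

/-- `T` acting on factors 1,4,5 of the sixfold Cartesian product `D⁶`. -/
def tetra145 {D : Type*} (T : D × D × D → D × D × D) :
    D × D × D × D × D × D → D × D × D × D × D × D :=
  fun q =>
    match q with
    | (x, y, z, r, s, t) =>
      ((T (x, r, s)).1, y, z, (T (x, r, s)).2.1, (T (x, r, s)).2.2, t)

/-- `T` acting on factors 2,4,6 of the sixfold Cartesian product `D⁶`. -/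
def tetra246 {D : Type*} (T : D × D × D → D × D × D) :
    D × D × D × D × D × D → D × D × D × D × D × D :=
  fun q =>
    match q with
    | (x, y, z, r, s, t) =>
      (x, (T (y, r, t)).1, z, (T (y, r, t)).2.1, s, (T (y, r, t)).2.2)

/-- `T` acting on factors 3,5,6 of the sixfold Cartesian product `D⁶`. -/
def tetra356 {D : Type*} (T : D × D × D → D × D × D) :
    D × D × D × D × D × D → D × D × D × D × D × D :=
  fun q =>
    match q with
    | (x, y, z, r, s, t) =>
      (x, y, (T (z, s, t)).1, r, (T (z, s, t)).2.1, (T (z, s, t)).2.2)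

/-- The (Zamolodchikov) tetrahedron equation for a map `T : D³ → D³`. -/
def IsTetrahedronMap {D : Type*} (T : D × D × D → D × D × D) : Prop :=
  tetra123 T ∘ tetra145 T ∘ tetra246 T ∘ tetra356 T =
    tetra356 T ∘ tetra246 T ∘ tetra145 T ∘ tetra123 T

theorem stmt_7 (K : Type*) [Field K] (n m : ℕ) (hn : 0 < n) (hm : 1 ≤ m) (hmn : m ≤ n) :
    IsTetrahedronMap (fun p :
        Matrix (Fin n) (Fin n) K × Matrix (Fin n) (Fin n) K × Matrix (Fin n) (Fin n) K =>
      (p.1,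
       Matrix.of (fun k l => p.2.1 k l + ∑ i : Fin m,
         p.1 k ⟨i.1, lt_of_lt_of_le i.isLt hmn⟩ *
           p.2.2 ⟨n - m + i.1, by have := i.isLt; omega⟩ l),
       p.2.2)) := by
  unfold IsTetrahedronMap tetra123 tetra145 tetra246 tetra356
  funext q
  obtain ⟨x, y, z, r, s, t⟩ := q
  simp only [Function.comp_apply]
  refine Prod.ext rfl (Prod.ext rfl (Prod.ext rfl (Prod.ext ?_ (Prod.ext rfl rfl))))
  ext k l
  simp only [Matrix.of_apply, Matrix.add_apply, Finset.sum_add_distrib, mul_add, add_mul,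
    Finset.mul_sum, Finset.sum_mul]
  have key : (∑ i : Fin m, ∑ j : Fin m,
        x k ⟨i.1, i.isLt.trans_le hmn⟩ *
          (z ⟨n - m + i.1, by have := i.isLt; omega⟩ ⟨j.1, j.isLt.trans_le hmn⟩ *
            t ⟨n - m + j.1, by have := j.isLt; omega⟩ l)) =
      ∑ i : Fin m, ∑ j : Fin m,
        x k ⟨j.1, j.isLt.trans_le hmn⟩ *
          z ⟨n - m + j.1, by have := j.isLt; omega⟩ ⟨i.1, i.isLt.trans_le hmn⟩ *
          t ⟨n - m + i.1, by have := i.isLt; omega⟩ l := by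
    rw [Finset.sum_comm]
    apply Finset.sum_congr rfl
    intro i _
    apply Finset.sum_congr rfl
    intro j _
    ring
  linear_combination key
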